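/- Let J = [[0, I_n], [-I_n, 0]] (a 2n×2n real matrix). If B is a 2n×2n real matrix such that J·g·J⁻¹·B = B·g for all g ∈ SO(2n), then J⁻¹B is a scalar matrix ±I, hence B = ±J and B² = -I ≠ I. Consequently there is no B with B² = I intertwining the SO(2n)-action with its twist by conjugation by J. -/

import Mathlib

open Matrix

section Aux

variable {ι : Type*} [Fintype ι] [DecidableEq ι]

theorem permMatrix_mem_orth' (σ : Equiv.Perm ι) :
    σ.permMatrix ℝ ∈ Matrix.orthogonalGroup ι ℝ := by
  rw [Matrix.mem_orthogonalGroup_iff]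
  have h1 : star (σ.permMatrix ℝ) = (σ⁻¹).permMatrix ℝ := by
    simp [Matrix.star_eq_conjTranspose, Equiv.Perm.permMatrix, ← PEquiv.toMatrix_symm,
      ← Equiv.toPEquiv_symm]
    rfl
  rw [← Matrix.conjTranspose_eq_transpose_of_trivial, ← Matrix.star_eq_conjTranspose]
  rw [h1, Equiv.Perm.permMatrix, Equiv.Perm.permMatrix, ← PEquiv.toMatrix_trans,
    ← Equiv.toPEquiv_trans, show σ.trans σ⁻¹ = Equiv.refl ι from Equiv.self_trans_symm σ,
    Equiv.toPEquiv_refl, PEquiv.toMatrix_refl]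

theorem signdiag_mem_orth' (d : ι → ℝ) (hd : ∀ l, d l = 1 ∨ d l = -1) :
    Matrix.diagonal d ∈ Matrix.orthogonalGroup ι ℝ := by
  rw [Matrix.mem_orthogonalGroup_iff]
  rw [← Matrix.conjTranspose_eq_transpose_of_trivial, ← Matrix.star_eq_conjTranspose]
  rw [Matrix.star_eq_conjTranspose, Matrix.diagonal_conjTranspose,
    Matrix.diagonal_mul_diagonal]
  have : (fun i => d i * star d i) = fun _ => (1:ℝ) := by
    funext l; rcases hd l with h | h <;> simp [h]
  rw [this, Matrix.diagonal_one]

theorem so_commutant_scalar (h4 : 4 ≤ Fintype.card ι) (A : Matrix ι ι ℝ)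
    (hA : ∀ g : Matrix ι ι ℝ, g ∈ Matrix.orthogonalGroup ι ℝ → g.det = 1 → g * A = A * g) :
    ∃ c : ℝ, A = c • 1 := by
  have hcard : ∀ s : Finset ι, s.card ≤ 3 → ∃ k, k ∉ s := by
    intro s hs
    by_contra h
    push_neg at h
    have hsub : (Finset.univ : Finset ι) ⊆ s := fun k _ => h k
    have := Finset.card_le_card hsub
    rw [Finset.card_univ] at this
    omega
  -- off diagonal entries vanish
  have hoff : ∀ i j : ι, i ≠ j → A i j = 0 := by
    intro i j hij
    obtain ⟨k, hk⟩ := hcard {i, j} (by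
      calc ({i, j} : Finset ι).card ≤ ({j} : Finset ι).card + 1 := Finset.card_insert_le _ _
        _ ≤ 3 := by simp)
    simp only [Finset.mem_insert, Finset.mem_singleton, not_or] at hk
    obtain ⟨hki, hkj⟩ := hk
    set d : ι → ℝ := fun l => (if l = i then (-1:ℝ) else 1) * (if l = k then (-1:ℝ) else 1)
      with hd_def
    have hd : ∀ l, d l = 1 ∨ d l = -1 := by
      intro l; simp only [hd_def]; split_ifs <;> norm_num
    have hdet : (Matrix.diagonal d).det = 1 := by
      rw [Matrix.det_diagonal]
      simp only [hd_def]
      rw [Finset.prod_mul_distrib,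
        Finset.prod_ite_eq' Finset.univ i fun _ => (-1:ℝ),
        Finset.prod_ite_eq' Finset.univ k fun _ => (-1:ℝ)]
      norm_num
    have hcomm := hA (Matrix.diagonal d) (signdiag_mem_orth' d hd) hdet
    have h2 := Matrix.ext_iff.2 hcomm i j
    rw [Matrix.diagonal_mul, Matrix.mul_diagonal] at h2
    have hik : i ≠ k := fun h => hki h.symm
    have hji : j ≠ i := fun h => hij h.symm
    have hjk : j ≠ k := fun h => hkj h.symm
    have hdi : d i = -1 := by simp [hd_def, hik]
    have hdj : d j = 1 := by simp [hd_def, hji, hjk]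
    rw [hdi, hdj] at h2
    linarith
  -- diagonal entries all equal
  have hdiag : ∀ i j : ι, A i i = A j j := by
    intro i j
    rcases eq_or_ne i j with rfl | hij
    · rfl
    obtain ⟨k, hk⟩ := hcard {i, j} (by
      calc ({i, j} : Finset ι).card ≤ ({j} : Finset ι).card + 1 := Finset.card_insert_le _ _
        _ ≤ 3 := by simp)
    obtain ⟨l, hl⟩ := hcard {i, j, k} (by
      calc ({i, j, k} : Finset ι).card ≤ ({j, k} : Finset ι).card + 1 :=
            Finset.card_insert_le _ _
        _ ≤ ({k} : Finset ι).card + 1 + 1 := by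
            have := Finset.card_insert_le j ({k} : Finset ι); omega
        _ ≤ 3 := by simp)
    simp only [Finset.mem_insert, Finset.mem_singleton, not_or] at hk hl
    obtain ⟨hki, hkj⟩ := hk
    obtain ⟨hli, hlj, hlk⟩ := hl
    set σ : Equiv.Perm ι := Equiv.swap i j * Equiv.swap k l with hσ
    have hdet : (σ.permMatrix ℝ).det = 1 := by
      rw [Matrix.det_permutation]
      have hkl : k ≠ l := fun h => hlk h.symm
      rw [hσ, Equiv.Perm.sign_mul, Equiv.Perm.sign_swap hij, Equiv.Perm.sign_swap hkl]
      norm_num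
    have hcomm := hA (σ.permMatrix ℝ) (permMatrix_mem_orth' σ) hdet
    rw [Equiv.Perm.permMatrix, PEquiv.toMatrix_toPEquiv_mul, PEquiv.mul_toMatrix_toPEquiv] at hcomm
    have h2 := Matrix.ext_iff.2 hcomm i j
    simp only [Matrix.submatrix_apply, id] at h2
    have hσi : σ i = j := by
      simp [hσ, Equiv.swap_apply_of_ne_of_ne (fun h => hki h.symm) (fun h => hli h.symm),
        Equiv.swap_apply_left]
    have hσj : σ.symm j = i := by
      have : σ i = j := hσi
      exact (Equiv.symm_apply_eq σ).2 this.symm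
    rw [hσi, hσj] at h2
    exact h2.symm
  -- conclude
  rcases isEmpty_or_nonempty ι with hE | hNE
  · exact ⟨0, by ext i j; exact absurd trivial (IsEmpty.elim hE i)⟩
  obtain ⟨i₀⟩ := hNE
  refine ⟨A i₀ i₀, ?_⟩
  ext i j
  rcases eq_or_ne i j with rfl | hij
  · simp [Matrix.one_apply_eq, hdiag i i₀]
  · simp [Matrix.one_apply_ne hij, hoff i j hij]

end Aux



/-- The standard complex-structure matrix `J = [[0, Iₙ],[-Iₙ, 0]]` on `ℝ^n ⊕ ℝ^n`. -/
def stdJR (n : ℕ) : Matrix (Fin n ⊕ Fin n) (Fin n ⊕ Fin n) ℝ :=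
  Matrix.fromBlocks 0 1 (-1) 0


theorem stdJR_mul_self (n : ℕ) : stdJR n * stdJR n = -1 := by
  unfold stdJR
  rw [Matrix.fromBlocks_multiply]
  have : (-1 : Matrix (Fin n ⊕ Fin n) (Fin n ⊕ Fin n) ℝ)
      = Matrix.fromBlocks (-1) (-0) (-0) (-1) := by
    rw [← Matrix.fromBlocks_neg, Matrix.fromBlocks_one]
  rw [this]
  simp

theorem stdJR_star (n : ℕ) : star (stdJR n) = -stdJR n := by
  unfold stdJR
  rw [Matrix.star_eq_conjTranspose, Matrix.fromBlocks_conjTranspose, Matrix.fromBlocks_neg]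
  simp

/-- If an orthogonal matrix `B` satisfies `J·g·J⁻¹·B = B·g` for all `g ∈ SO(2n)` (`n ≥ 2`),
then `J⁻¹B` is a scalar matrix `±1`, hence `B = ±J` and `B² = -1 ≠ 1`.  Consequently there
is no `B` with `B² = 1` intertwining the `SO(2n)`-action with its twist by conjugation
by `J`. -/
theorem no_involutive_extension_SOstar (n : ℕ) (hn : 2 ≤ n)
    (B : Matrix (Fin n ⊕ Fin n) (Fin n ⊕ Fin n) ℝ)
    (hB : B ∈ Matrix.orthogonalGroup (Fin n ⊕ Fin n) ℝ)
    (hint : ∀ g : Matrix (Fin n ⊕ Fin n) (Fin n ⊕ Fin n) ℝ,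
      g ∈ Matrix.orthogonalGroup (Fin n ⊕ Fin n) ℝ → g.det = 1 →
      stdJR n * g * (stdJR n)⁻¹ * B = B * g) :
    ((stdJR n)⁻¹ * B = 1 ∨ (stdJR n)⁻¹ * B = -1) ∧
      (B = stdJR n ∨ B = -stdJR n) ∧ B * B = -1 ∧ B * B ≠ 1 := by
  have hJJ := stdJR_mul_self n
  have hJinv : (stdJR n)⁻¹ = -stdJR n := by
    apply Matrix.inv_eq_right_inv
    rw [mul_neg, hJJ, neg_neg]
  have hJleft : (stdJR n)⁻¹ * stdJR n = 1 := by
    rw [hJinv, neg_mul, hJJ, neg_neg]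
  have hJright : stdJR n * (stdJR n)⁻¹ = 1 := by
    rw [hJinv, mul_neg, hJJ, neg_neg]
  -- the commutant element
  set A : Matrix (Fin n ⊕ Fin n) (Fin n ⊕ Fin n) ℝ := (stdJR n)⁻¹ * B with hA_def
  have hcard : 4 ≤ Fintype.card (Fin n ⊕ Fin n) := by
    simp [Fintype.card_sum]; omega
  have hcomm : ∀ g : Matrix (Fin n ⊕ Fin n) (Fin n ⊕ Fin n) ℝ,
      g ∈ Matrix.orthogonalGroup (Fin n ⊕ Fin n) ℝ → g.det = 1 → g * A = A * g := by
    intro g hg hdet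
    have h := congrArg (fun M => (stdJR n)⁻¹ * M) (hint g hg hdet)
    simp only [← mul_assoc] at h
    rw [hJleft, one_mul] at h
    simp only [hA_def, ← mul_assoc]
    exact h
  obtain ⟨c, hAc⟩ := so_commutant_scalar hcard A hcomm
  have hBJ : B = c • stdJR n := by
    have : stdJR n * A = B := by rw [hA_def, ← mul_assoc, hJright, one_mul]
    rw [← this, hAc, Matrix.mul_smul, mul_one]
  -- c² = 1 from orthogonality
  have i₀ : Fin n ⊕ Fin n := Sum.inl ⟨0, by omega⟩
  have hc2 : c * c = 1 := by
    have h1 := (Matrix.mem_orthogonalGroup_iff' (Fin n ⊕ Fin n) ℝ).1 hB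
    rw [← Matrix.conjTranspose_eq_transpose_of_trivial, ← Matrix.star_eq_conjTranspose] at h1
    rw [hBJ, star_smul, star_trivial, Matrix.smul_mul, Matrix.mul_smul, stdJR_star,
      neg_mul, hJJ, neg_neg, smul_smul] at h1
    have := Matrix.ext_iff.2 h1 i₀ i₀
    simpa [Matrix.smul_apply, Matrix.one_apply_eq] using this
  have hc : c = 1 ∨ c = -1 := mul_self_eq_one_iff.1 hc2
  refine ⟨?_, ?_, ?_, ?_⟩
  · rcases hc with h | h
    · left; rw [hAc, h, one_smul]
    · right; rw [hAc, h, neg_smul, one_smul]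
  · rcases hc with h | h
    · left; rw [hBJ, h, one_smul]
    · right; rw [hBJ, h, neg_smul, one_smul]
  · rw [hBJ, Matrix.smul_mul, Matrix.mul_smul, smul_smul, hc2, hJJ, one_smul]
  · intro h
    rw [hBJ, Matrix.smul_mul, Matrix.mul_smul, smul_smul, hc2, hJJ, one_smul] at h
    have := Matrix.ext_iff.2 h i₀ i₀
    simp only [Matrix.neg_apply, Matrix.one_apply_eq] at this
    norm_num at this
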